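/- Let N ≥ 2 be an integer, p > N, α > 0, and define f(t) = |t|^{p−2} t · max(sin t, 0) · φ_N(α|t|^{N/(N−1)}) and H̃(t) = t·f(t) − N·∫₀^t f(s) ds. Then for t_k = 2kπ with k a positive integer, H̃(t_k) < 0 and H̃(t_k) > H̃(t_{k+1}); in particular f does not satisfy the Ambrosetti–Rabinowitz condition (there is no θ > N and R > 0 with 0 < θ∫₀^t f ≤ t f(t) for all t ≥ R). -/

import Mathlib

open Real

/-- φ_N(t) = e^t − Σ_{j=0}^{N−2} t^j/j! -/
noncomputable def phiN (N : ℕ) (t : ℝ) : ℝ :=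
  Real.exp t - ∑ j ∈ Finset.range (N - 1), t ^ j / (Nat.factorial j : ℝ)

/-- f(t) = |t|^{p−2} t (sin t)₊ φ_N(α|t|^{N/(N−1)}) -/
noncomputable def fsin (N : ℕ) (p α : ℝ) (t : ℝ) : ℝ :=
  |t| ^ (p - 2) * t * max (Real.sin t) 0 * phiN N (α * |t| ^ ((N:ℝ)/((N:ℝ)-1)))

lemma phiN_nonneg {N : ℕ} (hN : 2 ≤ N) {s : ℝ} (hs : 0 ≤ s) : 0 ≤ phiN N s := by
  have h := Real.sum_le_exp_of_nonneg hs (N - 1)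
  simpa [phiN, sub_nonneg] using h

lemma phiN_pos {N : ℕ} (hN : 2 ≤ N) {s : ℝ} (hs : 0 < s) : 0 < phiN N s := by
  have h := Real.sum_le_exp_of_nonneg hs.le N
  have hsplit : ∑ j ∈ Finset.range N, s ^ j / (Nat.factorial j : ℝ)
      = (∑ j ∈ Finset.range (N-1), s ^ j / (Nat.factorial j : ℝ))
        + s ^ (N-1) / (Nat.factorial (N-1) : ℝ) := by
    have h1 : N = (N - 1) + 1 := by omega
    conv_lhs => rw [h1, Finset.sum_range_succ]
  have hpos : 0 < s ^ (N-1) / (Nat.factorial (N-1) : ℝ) := by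
    positivity
  rw [hsplit] at h
  have : ∑ j ∈ Finset.range (N-1), s ^ j / (Nat.factorial j : ℝ) < Real.exp s := by
    linarith
  simpa [phiN, sub_pos] using this

lemma continuous_fsin {N : ℕ} (hN : 2 ≤ N) {p α : ℝ} (hp : (N:ℝ) < p) :
    Continuous (fsin N p α) := by
  have h2 : (2:ℝ) ≤ (N:ℝ) := by exact_mod_cast hN
  have hc1 : Continuous fun t : ℝ => |t| ^ (p - 2) :=
    continuous_abs.rpow_const (fun x => Or.inr (by linarith))
  have hexp : (0:ℝ) ≤ (N:ℝ)/((N:ℝ)-1) := by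
    apply div_nonneg <;> linarith
  have hc2 : Continuous fun t : ℝ => α * |t| ^ ((N:ℝ)/((N:ℝ)-1)) :=
    continuous_const.mul (continuous_abs.rpow_const (fun x => Or.inr hexp))
  have hphi : Continuous (phiN N) := by
    unfold phiN
    apply Real.continuous_exp.sub
    exact continuous_finset_sum _ (fun j _ => (continuous_pow j).div_const _)
  exact ((hc1.mul continuous_id).mul (Real.continuous_sin.max continuous_const)).mul
    (hphi.comp hc2)

lemma fsin_nonneg {N : ℕ} (hN : 2 ≤ N) {p α : ℝ} (hα : 0 < α) {t : ℝ} (ht : 0 ≤ t) :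
    0 ≤ fsin N p α t := by
  unfold fsin
  have h1 : (0:ℝ) ≤ |t| ^ (p - 2) := Real.rpow_nonneg (abs_nonneg t) _
  have h2 : (0:ℝ) ≤ max (Real.sin t) 0 := le_max_right _ _
  have h3 : 0 ≤ phiN N (α * |t| ^ ((N:ℝ)/((N:ℝ)-1))) :=
    phiN_nonneg hN (by positivity)
  positivity

lemma fsin_pos {N : ℕ} (hN : 2 ≤ N) {p α : ℝ} (hα : 0 < α) {t : ℝ} (ht : 0 < t)
    (hsin : 0 < Real.sin t) : 0 < fsin N p α t := by
  unfold fsin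
  have h1 : (0:ℝ) < |t| ^ (p - 2) := Real.rpow_pos_of_pos (abs_pos.mpr ht.ne') _
  have h2 : (0:ℝ) < max (Real.sin t) 0 := lt_max_of_lt_left hsin
  have h3 : 0 < phiN N (α * |t| ^ ((N:ℝ)/((N:ℝ)-1))) := by
    apply phiN_pos hN
    have := Real.rpow_pos_of_pos (abs_pos.mpr ht.ne') ((N:ℝ)/((N:ℝ)-1))
    positivity
  positivity

lemma fsin_two_pi_mul {N : ℕ} (p α : ℝ) (k : ℕ) :
    fsin N p α (2 * (k:ℝ) * π) = 0 := by
  have : Real.sin (2 * (k:ℝ) * π) = 0 := by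
    rw [show 2 * (k:ℝ) * π = ((2 * k : ℤ) : ℝ) * π by push_cast; ring]
    exact Real.sin_int_mul_pi _
  unfold fsin
  rw [this]
  simp

/-- H̃(t) = t f(t) − N ∫₀^t f(s) ds -/
noncomputable def Htilde (N : ℕ) (p α : ℝ) (t : ℝ) : ℝ :=
  t * fsin N p α t - (N:ℝ) * ∫ s in (0:ℝ)..t, fsin N p α s

/-- for t_k = 2kπ, H̃(t_k) < 0 and H̃(t_k) > H̃(t_{k+1}); in
particular f does not satisfy the Ambrosetti–Rabinowitz condition. -/
theorem stmt_19 (N : ℕ) (hN : 2 ≤ N) (p α : ℝ) (hp : (N:ℝ) < p) (hα : 0 < α) :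
    (∀ k : ℕ, 0 < k →
      Htilde N p α (2 * (k:ℝ) * π) < 0 ∧
      Htilde N p α (2 * ((k:ℝ) + 1) * π) < Htilde N p α (2 * (k:ℝ) * π)) ∧
    ¬ ∃ θ R : ℝ, (N:ℝ) < θ ∧ 0 < R ∧
      ∀ t : ℝ, R ≤ t →
        0 < θ * (∫ s in (0:ℝ)..t, fsin N p α s) ∧
        θ * (∫ s in (0:ℝ)..t, fsin N p α s) ≤ t * fsin N p α t := by
  have hcont := continuous_fsin (α := α) hN hp
  have hint : ∀ a b : ℝ, IntervalIntegrable (fsin N p α) MeasureTheory.volume a b :=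
    fun a b => hcont.intervalIntegrable a b
  have hπ := Real.pi_pos
  have hNR : (0:ℝ) < (N:ℝ) := by positivity
  set f := fsin N p α with hf
  -- nonneg integrals
  have hnn : ∀ a b : ℝ, 0 ≤ a → a ≤ b → 0 ≤ ∫ s in a..b, f s := fun a b ha hab =>
    intervalIntegral.integral_nonneg hab (fun x hx => fsin_nonneg hN hα (le_trans ha hx.1))
  -- positivity over a half period
  have hseg : ∀ m : ℕ, 0 < ∫ s in (2*(m:ℝ)*π)..(2*(m:ℝ)*π + π), f s := by
    intro m
    apply intervalIntegral.intervalIntegral_pos_of_pos_on (hint _ _)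
    · intro x hx
      obtain ⟨h1, h2⟩ := hx
      have hm : (0:ℝ) ≤ 2*(m:ℝ)*π := by positivity
      have hxpos : 0 < x := lt_of_le_of_lt hm h1
      apply fsin_pos hN hα hxpos
      have hper := Real.sin_add_nat_mul_two_pi (x - 2*(m:ℝ)*π) m
      rw [show x - 2*(m:ℝ)*π + (m:ℝ)*(2*π) = x by ring] at hper
      rw [hper]
      apply Real.sin_pos_of_pos_of_lt_pi <;> linarith
    · linarith
  -- positivity over a full period
  have hper : ∀ m : ℕ, 0 < ∫ s in (2*(m:ℝ)*π)..(2*((m:ℝ)+1)*π), f s := by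
    intro m
    have hsplit : (∫ s in (2*(m:ℝ)*π)..(2*(m:ℝ)*π + π), f s)
        + ∫ s in (2*(m:ℝ)*π + π)..(2*((m:ℝ)+1)*π), f s
        = ∫ s in (2*(m:ℝ)*π)..(2*((m:ℝ)+1)*π), f s :=
      intervalIntegral.integral_add_adjacent_intervals (hint _ _) (hint _ _)
    have h2 : 0 ≤ ∫ s in (2*(m:ℝ)*π + π)..(2*((m:ℝ)+1)*π), f s :=
      hnn _ _ (by positivity) (by nlinarith)
    linarith [hseg m]
  set J : ℕ → ℝ := fun k => ∫ s in (0:ℝ)..(2*(k:ℝ)*π), f s with hJ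
  have hstep : ∀ k : ℕ, J k < J (k+1) := by
    intro k
    have hsplit : J k + (∫ s in (2*(k:ℝ)*π)..(2*((k:ℝ)+1)*π), f s) = J (k+1) := by
      have := intervalIntegral.integral_add_adjacent_intervals (a := 0)
        (b := 2*(k:ℝ)*π) (c := 2*((k:ℝ)+1)*π) (hint _ _) (hint _ _)
      simp only [hJ]
      push_cast
      exact this
    linarith [hper k]
  have hJpos : ∀ k : ℕ, 0 < k → 0 < J k := by
    intro k hk
    obtain ⟨m, rfl⟩ : ∃ m, k = m + 1 := ⟨k - 1, by omega⟩
    have h0 : 0 ≤ J m := hnn _ _ le_rfl (by positivity)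
    linarith [hstep m]
  have hHt : ∀ k : ℕ, Htilde N p α (2*(k:ℝ)*π) = -(N:ℝ) * J k := by
    intro k
    unfold Htilde
    have h0 : f (2*(k:ℝ)*π) = 0 := fsin_two_pi_mul p α k
    rw [← hf, h0, hJ]
    ring
  constructor
  · intro k hk
    have e1 := hHt k
    have e2 := hHt (k+1)
    rw [show 2*((k:ℝ)+1)*π = 2*(((k+1:ℕ)):ℝ)*π by push_cast; ring]
    rw [e1, e2]
    constructor
    · nlinarith [hJpos k hk]
    · nlinarith [hstep k, hJpos k hk]
  · rintro ⟨θ, R, hθ, hR, hAR⟩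
    obtain ⟨n, hn⟩ := exists_nat_ge R
    set k := n + 1 with hk
    have hkR : R ≤ 2*(k:ℝ)*π := by
      have h1 : (n:ℝ) ≤ (k:ℝ) := by rw [hk]; push_cast; linarith
      nlinarith [Real.pi_gt_three]
    obtain ⟨hpos, hle⟩ := hAR (2*(k:ℝ)*π) hkR
    have h0 : f (2*(k:ℝ)*π) = 0 := fsin_two_pi_mul p α k
    rw [h0, mul_zero] at hle
    linarith
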